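/- Every finite directed acyclic graph G with a unique sink z, maximum in-degree at most δ, and depth at most d (where the depth is the maximum number of edges on a directed path in G) has a persistent reversible pebbling using space at most d·δ + 1. -/

import Mathlib

open MvPolynomial

/-- A finite directed graph. -/
structure FinDigraph where
  V : Type
  [instFintype : Fintype V]
  Edge : V → V → Prop

attribute [instance] FinDigraph.instFintype

namespace FinDigraph

/-- The set of (immediate) predecessors of a vertex. -/
def pred (G : FinDigraph) (v : G.V) : Set G.V := {u | G.Edge u v}

/-- A directed graph is acyclic if no vertex reaches itself by a nonempty path. -/
def Acyclic (G : FinDigraph) : Prop := ∀ v, ¬ Relation.TransGen G.Edge v v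

/-- A sink is a vertex with no outgoing edge. -/
def IsSink (G : FinDigraph) (z : G.V) : Prop := ∀ u, ¬ G.Edge z u

/-- `z` is the unique sink of `G`. -/
def UniqueSink (G : FinDigraph) (z : G.V) : Prop :=
  G.IsSink z ∧ ∀ v, G.IsSink v → v = z

/-- One legal move of the reversible pebble game: place a pebble on a vertex all of whose
predecessors are pebbled, or remove a pebble from such a vertex. -/
def RevMove (G : FinDigraph) (P Q : Set G.V) : Prop :=
  ∃ v, G.pred v ⊆ P ∧
    ((v ∉ P ∧ Q = insert v P) ∨ (v ∈ P ∧ Q = P \ {v}))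

/-- One legal move of the standard pebble game: place a pebble on a vertex all of whose
predecessors are pebbled, or remove a pebble from an arbitrary vertex. -/
def StdMove (G : FinDigraph) (P Q : Set G.V) : Prop :=
  (∃ v, G.pred v ⊆ P ∧ v ∉ P ∧ Q = insert v P) ∨ (∃ v, v ∈ P ∧ Q = P \ {v})

/-- A reversible pebbling of `G` (with sink `z`) with time `t`. -/
def IsRevPebbling (G : FinDigraph) (z : G.V) (t : ℕ) (P : ℕ → Set G.V) : Prop :=
  P 0 = ∅ ∧ P t = ∅ ∧ (∃ i ≤ t, z ∈ P i) ∧ ∀ i < t, G.RevMove (P i) (P (i + 1))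

/-- A standard pebbling of `G` (with sink `z`) with time `t`. -/
def IsStdPebbling (G : FinDigraph) (z : G.V) (t : ℕ) (P : ℕ → Set G.V) : Prop :=
  P 0 = ∅ ∧ P t = ∅ ∧ (∃ i ≤ t, z ∈ P i) ∧ ∀ i < t, G.StdMove (P i) (P (i + 1))

/-- The space of a pebbling: the maximal number of pebbles in any configuration. -/
noncomputable def space (G : FinDigraph) (t : ℕ) (P : ℕ → Set G.V) : ℕ :=
  (Finset.range (t + 1)).sup fun i => (P i).ncard

end FinDigraph

namespace FinDigraph

/-- A persistent reversible pebbling: it starts with the empty configuration and ends with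
exactly one pebble, on the sink `z`. -/
def IsPersistentRevPebbling (G : FinDigraph) (z : G.V) (t : ℕ) (P : ℕ → Set G.V) : Prop :=
  P 0 = ∅ ∧ P t = {z} ∧ ∀ i < t, G.RevMove (P i) (P (i + 1))

/-- The depth of `G` is at most `d`: every directed path has at most `d` edges. -/
def DepthAtMost (G : FinDigraph) (d : ℕ) : Prop :=
  ∀ (k : ℕ) (f : ℕ → G.V), (∀ i < k, G.Edge (f i) (f (i + 1))) → k ≤ d

end FinDigraph

namespace PebbleAux

open Relation

variable {G : FinDigraph}

/-- Ancestors of `v` (including `v`). -/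
def Anc (G : FinDigraph) (v : G.V) : Set G.V := {u | Relation.ReflTransGen G.Edge u v}

lemma self_mem_anc (v : G.V) : v ∈ Anc G v := Relation.ReflTransGen.refl

lemma anc_mono {u v : G.V} (h : G.Edge u v) : Anc G u ⊆ Anc G v :=
  fun _ hx => Relation.ReflTransGen.tail hx h

/-- Lengths of directed paths ending at `v`. -/
def paths (G : FinDigraph) (v : G.V) : Set ℕ :=
  {k | ∃ f : ℕ → G.V, (∀ i < k, G.Edge (f i) (f (i + 1))) ∧ f k = v}

noncomputable def rank (G : FinDigraph) (v : G.V) : ℕ := sSup (paths G v)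

lemma zero_mem_paths (v : G.V) : 0 ∈ paths G v :=
  ⟨fun _ => v, fun i h => absurd h (Nat.not_lt_zero i), rfl⟩

variable {d : ℕ}

lemma paths_le (hdepth : G.DepthAtMost d) {v : G.V} : ∀ k ∈ paths G v, k ≤ d := by
  rintro k ⟨f, h1, -⟩; exact hdepth k f h1

lemma rank_le (hdepth : G.DepthAtMost d) (v : G.V) : rank G v ≤ d :=
  csSup_le ⟨0, zero_mem_paths v⟩ (paths_le hdepth)

lemma rank_mem (hdepth : G.DepthAtMost d) (v : G.V) : rank G v ∈ paths G v :=
  Nat.sSup_mem ⟨0, zero_mem_paths v⟩ ⟨d, paths_le hdepth⟩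

lemma edge_rank (hdepth : G.DepthAtMost d) {u v : G.V} (h : G.Edge u v) :
    rank G u + 1 ≤ rank G v := by
  obtain ⟨f, hf, hfu⟩ := rank_mem hdepth u
  apply le_csSup ⟨d, paths_le hdepth⟩
  refine ⟨fun i => if i ≤ rank G u then f i else v, fun i hi => ?_, ?_⟩
  · rcases Nat.lt_or_ge i (rank G u) with hlt | hge
    · simp only [if_pos hlt.le, if_pos (Nat.succ_le_of_lt hlt)]
      exact hf i hlt
    · have hieq : i = rank G u := le_antisymm (Nat.lt_succ_iff.mp hi) hge
      subst hieq
      simp only [if_pos le_rfl, if_neg (Nat.not_succ_le_self _), hfu]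
      exact h
  · simp [Nat.not_succ_le_self]

lemma rtg_rank (hdepth : G.DepthAtMost d) {u v : G.V} (h : Relation.ReflTransGen G.Edge u v) :
    rank G u ≤ rank G v := by
  induction h with
  | refl => exact le_rfl
  | tail _ he ih => exact ih.trans (Nat.le_of_succ_le (edge_rank hdepth he))

lemma no_selfloop (hdepth : G.DepthAtMost d) (a : G.V) : ¬ G.Edge a a := fun h => by
  have := edge_rank hdepth h; omega

lemma not_anc_of_edge (hdepth : G.DepthAtMost d) {u v : G.V} (h : G.Edge u v) :
    v ∉ Anc G u := fun hv => by
  have h1 := rtg_rank hdepth hv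
  have h2 := edge_rank hdepth h
  omega

lemma anc_rank_lt (hdepth : G.DepthAtMost d) {a b : G.V} (h : a ∈ Anc G b) (hne : a ≠ b) :
    rank G a < rank G b := by
  rcases Relation.ReflTransGen.cases_head h with rfl | ⟨c, hac, hcb⟩
  · exact absurd rfl hne
  · exact lt_of_lt_of_le (edge_rank hdepth hac) (rtg_rank hdepth hcb)

/-! ### The predecessor list, sorted by decreasing rank -/

noncomputable def predList (G : FinDigraph) (v : G.V) : List G.V :=
  ((G.pred v).toFinite.toFinset.toList).mergeSort
    (fun a b => decide (rank G b ≤ rank G a))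

lemma predList_perm (v : G.V) :
    (predList G v).Perm (G.pred v).toFinite.toFinset.toList :=
  List.mergeSort_perm _ _

lemma mem_predList {v x : G.V} : x ∈ predList G v ↔ G.Edge x v := by
  rw [(predList_perm v).mem_iff]
  simp [Set.Finite.mem_toFinset, FinDigraph.pred]

lemma predList_nodup (v : G.V) : (predList G v).Nodup :=
  (predList_perm v).nodup_iff.mpr (Finset.nodup_toList _)

lemma predList_length (v : G.V) : (predList G v).length = (G.pred v).ncard := by
  rw [(predList_perm v).length_eq, Finset.length_toList,
    Set.ncard_eq_toFinset_card (G.pred v) (G.pred v).toFinite]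

lemma predList_sorted (v : G.V) :
    (predList G v).Pairwise (fun a b => rank G b ≤ rank G a) := by
  have h := List.pairwise_mergeSort
    (le := fun a b : G.V => decide (rank G b ≤ rank G a))
    (fun a b c hab hbc => by
      simp only [decide_eq_true_eq] at *; omega)
    (fun a b => by
      simp only [Bool.or_eq_true, decide_eq_true_eq]; omega)
    ((G.pred v).toFinite.toFinset.toList)
  exact h.imp (by simp only [decide_eq_true_eq]; exact fun h => h)

lemma predList_pairwise_not_anc (hdepth : G.DepthAtMost d) (v : G.V) :
    (predList G v).Pairwise (fun a b => a ∉ Anc G b) := by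
  have h := (predList_sorted v).and (predList_nodup v)
  exact h.imp (by
    rintro a b ⟨hle, hne⟩ hanc
    exact absurd (anc_rank_lt hdepth hanc hne) (by omega))

/-! ### The reversible pebbling calculus -/

/-- Toggle the pebble on `a`. -/
def tog (P : Set G.V) (a : G.V) : Set G.V := {x | x ∈ P ↔ x ≠ a}

lemma tog_eq_insert {P : Set G.V} {a : G.V} (h : a ∉ P) : tog P a = insert a P := by
  ext x; rcases eq_or_ne x a with rfl | hx
  · simp [tog, h]
  · simp [tog, hx]

lemma tog_eq_diff {P : Set G.V} {a : G.V} (h : a ∈ P) : tog P a = P \ {a} := by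
  ext x; rcases eq_or_ne x a with rfl | hx
  · simp [tog, h]
  · simp [tog, hx]

lemma tog_tog (P : Set G.V) (a : G.V) : tog (tog P a) a = P := by
  ext x; rcases eq_or_ne x a with rfl | hx
  · by_cases h : x ∈ P <;> simp [tog, h]
  · simp [tog, hx]

lemma tog_insert {P : Set G.V} {a v : G.V} (h : a ≠ v) :
    tog (insert v P) a = insert v (tog P a) := by
  ext x
  rcases eq_or_ne x v with rfl | hxv
  · simp [tog, h.symm, Ne.symm h]
  · rcases eq_or_ne x a with rfl | hxa
    · simp [tog, hxv]
    · simp [tog, hxa, hxv]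

def exec (P : Set G.V) (L : List G.V) : Set G.V := L.foldl tog P

@[simp] lemma exec_nil (P : Set G.V) : exec P [] = P := rfl

@[simp] lemma exec_cons (P : Set G.V) (a : G.V) (l : List G.V) :
    exec P (a :: l) = exec (tog P a) l := rfl

lemma exec_append (P : Set G.V) (l₁ l₂ : List G.V) :
    exec P (l₁ ++ l₂) = exec (exec P l₁) l₂ := List.foldl_append ..

def Valid : Set G.V → List G.V → Prop
  | _, [] => True
  | P, a :: l => G.pred a ⊆ P ∧ Valid (tog P a) l

@[simp] lemma valid_nil (P : Set G.V) : Valid P [] := trivial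

@[simp] lemma valid_cons {P : Set G.V} {a : G.V} {l : List G.V} :
    Valid P (a :: l) ↔ G.pred a ⊆ P ∧ Valid (tog P a) l := Iff.rfl

def inter : Set G.V → List G.V → List (Set G.V)
  | P, [] => [P]
  | P, a :: l => P :: inter (tog P a) l

@[simp] lemma inter_nil (P : Set G.V) : inter P [] = [P] := rfl

@[simp] lemma inter_cons (P : Set G.V) (a : G.V) (l : List G.V) :
    inter P (a :: l) = P :: inter (tog P a) l := rfl

lemma self_mem_inter (P : Set G.V) (L : List G.V) : P ∈ inter P L := by
  cases L <;> simp

lemma exec_mem_inter (P : Set G.V) (L : List G.V) : exec P L ∈ inter P L := by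
  induction L generalizing P with
  | nil => simp
  | cons a l ih => simp only [exec_cons, inter_cons, List.mem_cons]; right; exact ih _

lemma valid_append {P : Set G.V} {l₁ l₂ : List G.V} :
    Valid P (l₁ ++ l₂) ↔ Valid P l₁ ∧ Valid (exec P l₁) l₂ := by
  induction l₁ generalizing P with
  | nil => simp
  | cons a l ih => simp [ih, and_assoc]

lemma mem_inter_append {P Q : Set G.V} {l₁ l₂ : List G.V} :
    Q ∈ inter P (l₁ ++ l₂) ↔ Q ∈ inter P l₁ ∨ Q ∈ inter (exec P l₁) l₂ := by
  induction l₁ generalizing P with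
  | nil =>
    simp only [List.nil_append, inter_nil, List.mem_singleton, exec_nil]
    constructor
    · intro h; right; exact h
    · rintro (rfl | h)
      · exact self_mem_inter _ _
      · exact h
  | cons a l ih =>
    simp only [List.cons_append, inter_cons, List.mem_cons, exec_cons, ih, or_assoc]

lemma exec_rev (P : Set G.V) (L : List G.V) : exec (exec P L) L.reverse = P := by
  induction L generalizing P with
  | nil => simp
  | cons a l ih =>
    simp only [exec_cons, List.reverse_cons, exec_append, ih, exec_nil]
    exact tog_tog P a

lemma valid_rev (hsl : ∀ a : G.V, a ∉ G.pred a) {P : Set G.V} {L : List G.V}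
    (h : Valid P L) : Valid (exec P L) L.reverse := by
  induction L generalizing P with
  | nil => simp
  | cons a l ih =>
    obtain ⟨h1, h2⟩ := h
    simp only [exec_cons, List.reverse_cons]
    rw [valid_append]
    refine ⟨ih h2, ?_⟩
    rw [exec_rev]
    refine ⟨fun x hx => ?_, trivial⟩
    have hxa : x ≠ a := fun e => hsl a (e ▸ hx)
    have hxP : x ∈ P := h1 hx
    simp [tog, hxa, hxP]

lemma mem_inter_rev {P Q : Set G.V} {L : List G.V} :
    Q ∈ inter (exec P L) L.reverse ↔ Q ∈ inter P L := by
  induction L generalizing P with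
  | nil => simp
  | cons a l ih =>
    simp only [exec_cons, List.reverse_cons, mem_inter_append, ih, exec_rev,
      inter_cons, inter_nil, List.mem_cons, List.mem_singleton, List.not_mem_nil, or_false]
    rw [tog_tog]
    constructor
    · rintro (h | rfl | rfl)
      · right; exact h
      · right; exact self_mem_inter _ _
      · left; rfl
    · rintro (rfl | h)
      · right; right; rfl
      · left; exact h

lemma valid_insert {P : Set G.V} {v : G.V} {L : List G.V} (hv : v ∉ L)
    (h : Valid P L) : Valid (insert v P) L := by
  induction L generalizing P with
  | nil => simp
  | cons a l ih =>
    obtain ⟨h1, h2⟩ := h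
    have hav : a ≠ v := fun hav => hv (hav ▸ List.mem_cons_self (a := a) (l := l))
    refine ⟨h1.trans (Set.subset_insert _ _), ?_⟩
    rw [tog_insert hav]
    exact ih (fun hm => hv (List.mem_cons_of_mem a hm)) h2

lemma exec_insert {P : Set G.V} {v : G.V} {L : List G.V} (hv : v ∉ L) :
    exec (insert v P) L = insert v (exec P L) := by
  induction L generalizing P with
  | nil => simp
  | cons a l ih =>
    have hav : a ≠ v := fun hav => hv (hav ▸ List.mem_cons_self (a := a) (l := l))
    simp only [exec_cons, tog_insert hav]
    exact ih (fun hm => hv (List.mem_cons_of_mem a hm))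

lemma inter_insert {P : Set G.V} {v : G.V} {L : List G.V} (hv : v ∉ L) :
    inter (insert v P) L = (inter P L).map (insert v) := by
  induction L generalizing P with
  | nil => simp
  | cons a l ih =>
    have hav : a ≠ v := fun hav => hv (hav ▸ List.mem_cons_self (a := a) (l := l))
    simp only [inter_cons, tog_insert hav, List.map_cons]
    rw [ih (fun hm => hv (List.mem_cons_of_mem a hm))]

lemma valid_take {P : Set G.V} {L : List G.V} (h : Valid P L) {i : ℕ} (hi : i < L.length) :
    G.pred (L.get ⟨i, hi⟩) ⊆ exec P (L.take i) := by
  have hL : L = L.take i ++ (L.get ⟨i, hi⟩ :: L.drop (i + 1)) := by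
    conv_lhs => rw [← List.take_append_drop i L]
    rw [List.drop_eq_getElem_cons hi]
    rfl
  rw [hL, valid_append] at h
  exact h.2.1

lemma exec_take_mem_inter (P : Set G.V) (L : List G.V) (i : ℕ) :
    exec P (L.take i) ∈ inter P L := by
  have h : exec P (L.take i) ∈ inter P (L.take i ++ L.drop i) :=
    mem_inter_append.mpr (Or.inr (self_mem_inter _ _))
  rwa [List.take_append_drop] at h

/-! ### The recursive pebbling sequence -/

noncomputable def seqAux (G : FinDigraph) : ℕ → G.V → List G.V
  | 0, v => [v]
  | n + 1, v =>
    ((predList G v).flatMap (seqAux G n)) ++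
      v :: ((predList G v).flatMap (seqAux G n)).reverse

lemma seq_subset_anc (hdepth : G.DepthAtMost d) :
    ∀ n, ∀ u : G.V, rank G u ≤ n → ∀ x ∈ seqAux G n u, x ∈ Anc G u := by
  intro n
  induction n with
  | zero =>
    intro u _ x hx
    simp only [seqAux, List.mem_singleton] at hx
    exact hx ▸ self_mem_anc u
  | succ n ih =>
    intro u hu x hx
    simp only [seqAux, List.mem_append, List.mem_cons, List.mem_reverse] at hx
    have hF : x ∈ (predList G u).flatMap (seqAux G n) → x ∈ Anc G u := by
      intro hxF
      obtain ⟨w, hw, hxw⟩ := List.mem_flatMap.mp hxF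
      have hew : G.Edge w u := mem_predList.mp hw
      have hrw : rank G w ≤ n := by have := edge_rank hdepth hew; omega
      exact anc_mono hew (ih w hrw x hxw)
    rcases hx with h | rfl | h
    · exact hF h
    · exact self_mem_anc x
    · exact hF h

/-- The main inductive step over the list of predecessors. -/
lemma chain (hdepth : G.DepthAtMost d) {δ : ℕ} (n : ℕ)
    (IH : ∀ u : G.V, rank G u ≤ n → ∀ P : Set G.V, (∀ x ∈ P, x ∉ Anc G u) →
      Valid P (seqAux G n u) ∧ exec P (seqAux G n u) = insert u P ∧
      ∀ Q ∈ inter P (seqAux G n u),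
        (∀ x ∈ Q, x ∈ P ∨ x ∈ Anc G u) ∧ (Q \ P).ncard ≤ n * δ + 1) :
    ∀ L : List G.V, (∀ u ∈ L, rank G u ≤ n) → L.Pairwise (fun a b => a ∉ Anc G b) →
    ∀ P : Set G.V, (∀ x ∈ P, ∀ u ∈ L, x ∉ Anc G u) →
      Valid P (L.flatMap (seqAux G n)) ∧
      exec P (L.flatMap (seqAux G n)) = P ∪ {x | x ∈ L} ∧
      ∀ Q ∈ inter P (L.flatMap (seqAux G n)),
        (∀ x ∈ Q, x ∈ P ∨ ∃ u ∈ L, x ∈ Anc G u) ∧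
        (Q \ P).ncard + 1 ≤ L.length + (n * δ + 1) := by
  intro L
  induction L with
  | nil =>
    intro _ _ P _
    refine ⟨by simp, by simp, ?_⟩
    intro Q hQ
    simp only [List.flatMap_nil, inter_nil, List.mem_singleton] at hQ
    subst hQ
    refine ⟨fun x hx => Or.inl hx, ?_⟩
    simp
  | cons u L' ihL =>
    intro hL hpw P hP
    have hpwc := List.pairwise_cons.mp hpw
    have h1 := IH u (hL u (List.mem_cons_self (a := u) (l := L'))) P
      (fun x hx => hP x hx u (List.mem_cons_self (a := u) (l := L')))
    have hdisj1 : ∀ x ∈ insert u P, ∀ w ∈ L', x ∉ Anc G w := by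
      intro x hx w hw
      rcases Set.mem_insert_iff.mp hx with rfl | hxP
      · exact hpwc.1 w hw
      · exact hP x hxP w (List.mem_cons_of_mem u hw)
    have h2 := ihL (fun w hw => hL w (List.mem_cons_of_mem u hw)) hpwc.2
      (insert u P) hdisj1
    have hflat : (u :: L').flatMap (seqAux G n)
        = seqAux G n u ++ L'.flatMap (seqAux G n) := by
      simp [List.flatMap_cons]
    refine ⟨?_, ?_, ?_⟩
    · rw [hflat, valid_append, h1.2.1]
      exact ⟨h1.1, h2.1⟩
    · rw [hflat, exec_append, h1.2.1, h2.2.1]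
      ext x
      simp only [Set.mem_union, Set.mem_insert_iff, Set.mem_setOf_eq, List.mem_cons]
      tauto
    · intro Q hQ
      rw [hflat] at hQ
      rcases mem_inter_append.mp hQ with hA | hB
      · obtain ⟨hcont, hcard⟩ := h1.2.2 Q hA
        refine ⟨?_, ?_⟩
        · intro x hx
          rcases hcont x hx with h | h
          · exact Or.inl h
          · exact Or.inr ⟨u, List.mem_cons_self (a := u) (l := L'), h⟩
        · simp only [List.length_cons]
          omega
      · rw [h1.2.1] at hB
        obtain ⟨hcont, hcard⟩ := h2.2.2 Q hB
        refine ⟨?_, ?_⟩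
        · intro x hx
          rcases hcont x hx with h | ⟨w, hw, hxw⟩
          · rcases Set.mem_insert_iff.mp h with rfl | hxP
            · exact Or.inr ⟨x, List.mem_cons_self (a := x) (l := L'), self_mem_anc x⟩
            · exact Or.inl hxP
          · exact Or.inr ⟨w, List.mem_cons_of_mem u hw, hxw⟩
        · have hsub : Q \ P ⊆ (Q \ insert u P) ∪ {u} := by
            intro x hx
            rcases eq_or_ne x u with rfl | hxu
            · exact Or.inr rfl
            · exact Or.inl ⟨hx.1, fun hc =>
                hx.2 (by rcases Set.mem_insert_iff.mp hc with h | h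
                         · exact absurd h hxu
                         · exact h)⟩
          have := Set.ncard_le_ncard hsub ((Q \ insert u P) ∪ {u}).toFinite
          have hu := Set.ncard_union_le (Q \ insert u P) {u}
          have h1' : ({u} : Set G.V).ncard = 1 := Set.ncard_singleton u
          simp only [List.length_cons]
          omega

/-- The master lemma: `seqAux n v` is a legal reversible sequence from any configuration
disjoint from the ancestors of `v`, it adds exactly a pebble on `v`, and every intermediate
configuration adds at most `n * δ + 1` pebbles. -/
lemma main (hdepth : G.DepthAtMost d) {δ : ℕ} (hdeg : ∀ v : G.V, (G.pred v).ncard ≤ δ) :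
    ∀ n, ∀ v : G.V, rank G v ≤ n → ∀ P : Set G.V, (∀ x ∈ P, x ∉ Anc G v) →
      Valid P (seqAux G n v) ∧ exec P (seqAux G n v) = insert v P ∧
      ∀ Q ∈ inter P (seqAux G n v),
        (∀ x ∈ Q, x ∈ P ∨ x ∈ Anc G v) ∧ (Q \ P).ncard ≤ n * δ + 1 := by
  intro n
  induction n with
  | zero =>
    intro v hv P hP
    have hvP : v ∉ P := fun h => hP v h (self_mem_anc v)
    have hpred : G.pred v ⊆ P := by
      intro u hu
      exact absurd (edge_rank hdepth hu) (by omega)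
    refine ⟨⟨hpred, trivial⟩, ?_, ?_⟩
    · show tog P v = insert v P
      exact tog_eq_insert hvP
    · intro Q hQ
      simp only [seqAux, inter_cons, inter_nil, List.mem_cons, List.mem_singleton,
        List.not_mem_nil, or_false] at hQ
      rcases hQ with rfl | rfl
      · exact ⟨fun x hx => Or.inl hx, by simp⟩
      · rw [tog_eq_insert hvP]
        refine ⟨?_, ?_⟩
        · intro x hx
          rcases Set.mem_insert_iff.mp hx with rfl | h
          · exact Or.inr (self_mem_anc x)
          · exact Or.inl h
        · have : insert v P \ P = {v} := by
            ext x
            simp only [Set.mem_diff, Set.mem_insert_iff, Set.mem_singleton_iff]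
            constructor
            · rintro ⟨rfl | h, hnp⟩
              · rfl
              · exact absurd h hnp
            · rintro rfl; exact ⟨Or.inl rfl, hvP⟩
          rw [this, Set.ncard_singleton]
          omega
  | succ n ih =>
    intro v hv P hP
    set L := predList G v with hL
    set F := L.flatMap (seqAux G n) with hF
    have hseq : seqAux G (n + 1) v = F ++ v :: F.reverse := by
      simp [seqAux, hF, hL]
    have hLrank : ∀ u ∈ L, rank G u ≤ n := by
      intro u hu
      have := edge_rank hdepth (mem_predList.mp hu)
      omega
    have hPdisj : ∀ x ∈ P, ∀ u ∈ L, x ∉ Anc G u := by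
      intro x hx u hu hxa
      exact hP x hx (anc_mono (mem_predList.mp hu) hxa)
    have hch := chain hdepth n ih L hLrank (predList_pairwise_not_anc hdepth v) P hPdisj
    set R := exec P F with hR
    have hRset : R = P ∪ {x | x ∈ L} := hch.2.1
    have hvP : v ∉ P := fun h => hP v h (self_mem_anc v)
    have hvL : v ∉ L := fun h => no_selfloop hdepth v (mem_predList.mp h)
    have hvR : v ∉ R := by
      rw [hRset]
      rintro (h | h)
      · exact hvP h
      · exact hvL h
    have hvF : v ∉ F := by
      intro h
      obtain ⟨u, hu, hxu⟩ := List.mem_flatMap.mp h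
      exact not_anc_of_edge hdepth (mem_predList.mp hu)
        (seq_subset_anc hdepth n u (hLrank u hu) v hxu)
    have hpredR : G.pred v ⊆ R := by
      intro u hu
      rw [hRset]
      exact Or.inr (mem_predList.mpr hu)
    have htogR : tog R v = insert v R := tog_eq_insert hvR
    have hsl : ∀ a : G.V, a ∉ G.pred a := fun a => no_selfloop hdepth a
    have hexecrev : exec R F.reverse = P := exec_rev P F
    have hLlen : L.length ≤ δ := by
      rw [hL, predList_length]
      exact hdeg v
    -- the property of configurations reached during `F`
    have hAprop : ∀ Q ∈ inter P F,
        (∀ x ∈ Q, x ∈ P ∨ x ∈ Anc G v) ∧ (Q \ P).ncard ≤ (n + 1) * δ := by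
      intro Q hQ
      obtain ⟨hcont, hcard⟩ := hch.2.2 Q hQ
      refine ⟨?_, ?_⟩
      · intro x hx
        rcases hcont x hx with h | ⟨u, hu, hxu⟩
        · exact Or.inl h
        · exact Or.inr (anc_mono (mem_predList.mp hu) hxu)
      · have : (n + 1) * δ = n * δ + δ := by ring
        omega
    refine ⟨?_, ?_, ?_⟩
    · rw [hseq, valid_append]
      refine ⟨hch.1, hpredR, ?_⟩
      rw [htogR]
      exact valid_insert (by simpa using hvF) (valid_rev hsl hch.1)
    · rw [hseq, exec_append, ← hR]
      show exec (tog R v) F.reverse = insert v P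
      rw [htogR, exec_insert (by simpa using hvF), hexecrev]
    · intro Q hQ
      rw [hseq] at hQ
      rcases mem_inter_append.mp hQ with hA | hB
      · obtain ⟨hcont, hcard⟩ := hAprop Q hA
        exact ⟨hcont, by omega⟩
      · rw [← hR] at hB
        simp only [inter_cons, List.mem_cons] at hB
        rcases hB with hQR | hB
        · obtain ⟨hcont, hcard⟩ := hAprop Q (by rw [hQR, hR]; exact exec_mem_inter P F)
          exact ⟨hcont, by omega⟩
        · rw [htogR, inter_insert (by simpa using hvF)] at hB
          obtain ⟨Q', hQ', rfl⟩ := List.mem_map.mp hB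
          have hQ'F : Q' ∈ inter P F := by
            rw [hR] at hQ'
            exact mem_inter_rev.mp hQ'
          obtain ⟨hcont, hcard⟩ := hAprop Q' hQ'F
          refine ⟨?_, ?_⟩
          · intro x hx
            rcases Set.mem_insert_iff.mp hx with rfl | h
            · exact Or.inr (self_mem_anc x)
            · exact hcont x h
          · have hsub : insert v Q' \ P ⊆ insert v (Q' \ P) := by
              intro x hx
              rcases Set.mem_insert_iff.mp hx.1 with rfl | h
              · exact Or.inl rfl
              · exact Or.inr ⟨h, hx.2⟩
            have h1' := Set.ncard_le_ncard hsub (insert v (Q' \ P)).toFinite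
            have h2' := Set.ncard_insert_le v (Q' \ P)
            omega

end PebbleAux

/-- Every finite DAG with a unique sink `z`, maximum in-degree at most `δ` and
depth at most `d` has a persistent reversible pebbling using space at most `d * δ + 1`. -/
theorem persistent_reversible_pebbling_of_depth (G : FinDigraph) (hacy : G.Acyclic)
    (z : G.V) (hz : G.UniqueSink z) (δ d : ℕ)
    (hdeg : ∀ v, (G.pred v).ncard ≤ δ) (hdepth : G.DepthAtMost d) :
    ∃ (t : ℕ) (P : ℕ → Set G.V),
      G.IsPersistentRevPebbling z t P ∧ G.space t P ≤ d * δ + 1 := by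
  classical
  have h := PebbleAux.main hdepth hdeg d z (PebbleAux.rank_le hdepth z) ∅ (by simp)
  set S := PebbleAux.seqAux G d z with hS
  refine ⟨S.length, fun i => PebbleAux.exec ∅ (S.take i), ⟨?_, ?_, ?_⟩, ?_⟩
  · simp
  · show PebbleAux.exec ∅ (S.take S.length) = {z}
    rw [List.take_length, h.2.1]
    simp
  · intro i hi
    refine ⟨S.get ⟨i, hi⟩, PebbleAux.valid_take h.1 hi, ?_⟩
    have htake : S.take (i + 1) = S.take i ++ [S.get ⟨i, hi⟩] := by
      rw [List.take_succ, List.getElem?_eq_getElem hi]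
      rfl
    by_cases hmem : S.get ⟨i, hi⟩ ∈ PebbleAux.exec ∅ (S.take i)
    · refine Or.inr ⟨hmem, ?_⟩
      show PebbleAux.exec ∅ (S.take (i + 1)) = _
      rw [htake, PebbleAux.exec_append]
      show PebbleAux.tog _ _ = _
      exact PebbleAux.tog_eq_diff hmem
    · refine Or.inl ⟨hmem, ?_⟩
      show PebbleAux.exec ∅ (S.take (i + 1)) = _
      rw [htake, PebbleAux.exec_append]
      show PebbleAux.tog _ _ = _
      exact PebbleAux.tog_eq_insert hmem
  · apply Finset.sup_le
    intro i _
    have hb := (h.2.2 _ (PebbleAux.exec_take_mem_inter ∅ S i)).2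
    simpa using hb
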